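/- Under assumptions (f1)–(f5), for every α ∈ (0, σ_c/2) there exists a unique z_α ∈ (0,1) such that f'(z_α)/((1-z_α)f(z_α)³) = 1/(2α)², and moreover (1-z_α)f(z_α) > 2α. -/

import Mathlib

open Set Filter

set_option maxHeartbeats 1000000

/-- Under assumptions (f1)-(f5), for every `α ∈ (0, σ_c/2)` there is a unique
`z_α ∈ (0,1)` with `f'(z_α)/((1-z_α)f(z_α)³) = 1/(2α)²`, and `(1-z_α)f(z_α) > 2α`. -/
theorem stmt4 (f f' f'' : ℝ → ℝ) (σc : ℝ) (hσ : 0 < σc)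
    (hf_nonneg : ∀ s ∈ Ico (0:ℝ) 1, 0 ≤ f s)
    (hf_zero : ∀ s ∈ Ico (0:ℝ) 1, (f s = 0 ↔ s = 0))
    (hc0 : ContinuousOn f (Ico 0 1))
    (hd1 : ∀ s ∈ Ioo (0:ℝ) 1, HasDerivAt f (f' s) s)
    (hd2 : ∀ s ∈ Ioo (0:ℝ) 1, HasDerivAt f' (f'' s) s)
    (hc2 : ContinuousOn f'' (Ioo 0 1))
    (hf3 : ∀ s ∈ Ioo (0:ℝ) 1, 0 < (1 - s) * f' s - f s)
    (hf2 : Tendsto (fun s => (1 - s) * f s) (nhdsWithin 1 (Iio 1)) (nhds σc))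
    (hf4 : ∀ s ∈ Ioo (0:ℝ) 1, deriv (fun t => (1 - t) * f' t / f t) s < 0)
    (hf5 : Tendsto (fun s => ((1 - s) * f' s - f s) / (1 - s) ^ 3)
      (nhdsWithin 1 (Iio 1)) atTop) :
    ∀ α ∈ Ioo (0:ℝ) (σc / 2), ∃ z ∈ Ioo (0:ℝ) 1,
      f' z / ((1 - z) * (f z) ^ 3) = 1 / (2 * α) ^ 2 ∧
      2 * α < (1 - z) * f z ∧
      ∀ w ∈ Ioo (0:ℝ) 1, f' w / ((1 - w) * (f w) ^ 3) = 1 / (2 * α) ^ 2 → w = z := by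
  have hfpos : ∀ s ∈ Ioo (0:ℝ) 1, 0 < f s := by
    intro s hs
    have h0 : f s ≠ 0 := fun hz => (ne_of_gt hs.1) ((hf_zero s ⟨hs.1.le, hs.2⟩).mp hz)
    exact lt_of_le_of_ne (hf_nonneg s ⟨hs.1.le, hs.2⟩) (Ne.symm h0)
  set F : ℝ → ℝ := fun s => (1 - s) * f s with hFdef
  set h : ℝ → ℝ := fun s => (1 - s) * f' s / f s with hhdef
  have hFder : ∀ s ∈ Ioo (0:ℝ) 1, HasDerivAt F ((1 - s) * f' s - f s) s := by
    intro s hs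
    have := ((hasDerivAt_id s).const_sub 1).mul (hd1 s hs)
    refine this.congr_deriv ?_
    simp only [id_eq]
    ring
  have hFpos : ∀ s ∈ Ioo (0:ℝ) 1, 0 < F s := fun s hs =>
    mul_pos (by linarith [hs.2]) (hfpos s hs)
  have hFmono : StrictMonoOn F (Ioo 0 1) := by
    apply strictMonoOn_of_deriv_pos (convex_Ioo 0 1)
    · intro s hs
      exact ((hFder s hs).differentiableAt.continuousAt).continuousWithinAt
    · intro s hs
      rw [interior_Ioo] at hs
      rw [(hFder s hs).deriv]
      exact hf3 s hs
  have hFle : ∀ t ∈ Ioo (0:ℝ) 1, F t ≤ σc := by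
    intro t ht
    refine ge_of_tendsto hf2 ?_
    filter_upwards [Ioo_mem_nhdsLT_of_mem (⟨ht.2, le_refl 1⟩ : (1:ℝ) ∈ Ioc t 1)] with u hu
    exact (hFmono ht ⟨ht.1.trans hu.1, hu.2⟩ hu.1).le
  have hh1 : ∀ s ∈ Ioo (0:ℝ) 1, 1 < h s := by
    intro s hs
    have : (1:ℝ) < (1 - s) * f' s / f s := by
      rw [lt_div_iff₀ (hfpos s hs)]
      nlinarith [hf3 s hs]
    exact this
  have hcontf' : ContinuousOn f' (Ioo 0 1) := fun s hs =>
    ((hd2 s hs).differentiableAt.continuousAt).continuousWithinAt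
  have hcontf : ContinuousOn f (Ioo 0 1) := fun s hs =>
    ((hd1 s hs).differentiableAt.continuousAt).continuousWithinAt
  have hhanti : StrictAntiOn h (Ioo 0 1) := by
    apply strictAntiOn_of_deriv_neg (convex_Ioo 0 1)
    · exact (((continuousOn_const.sub continuousOn_id).mul hcontf').div hcontf
        (fun s hs => (hfpos s hs).ne'))
    · intro s hs
      rw [interior_Ioo] at hs
      exact hf4 s hs
  set g : ℝ → ℝ := fun s => f' s / ((1 - s) * f s ^ 3) with hgdef
  have hgeq : ∀ s ∈ Ioo (0:ℝ) 1, g s = h s / F s ^ 2 := by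
    intro s hs
    have h1 : (0:ℝ) < 1 - s := by linarith [hs.2]
    have h2 : f s ≠ 0 := (hfpos s hs).ne'
    show f' s / ((1 - s) * f s ^ 3) = ((1 - s) * f' s / f s) / ((1 - s) * f s) ^ 2
    field_simp
  have hganti : StrictAntiOn g (Ioo 0 1) := by
    intro x hx y hy hxy
    rw [hgeq x hx, hgeq y hy]
    have h1 : 0 < F x := hFpos x hx
    have h2 : F x < F y := hFmono hx hy hxy
    have h3 : h y < h x := hhanti hx hy hxy
    have h4 : 0 < h y := lt_trans one_pos (hh1 y hy)
    calc h y / F y ^ 2 ≤ h y / F x ^ 2 :=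
          div_le_div_of_nonneg_left h4.le (by positivity) (by nlinarith)
      _ < h x / F x ^ 2 := (div_lt_div_iff_of_pos_right (by positivity)).mpr h3
  intro α hα
  have hα0 : 0 < α := hα.1
  have h2α : 2 * α < σc := by
    have := hα.2
    linarith
  set c : ℝ := 1 / (2 * α) ^ 2 with hcdef
  have hc : 0 < c := by positivity
  have hcσ : 1 < c * σc ^ 2 := by
    rw [hcdef, div_mul_eq_mul_div, one_mul, lt_div_iff₀ (by positivity)]
    nlinarith
  set ε : ℝ := (c * σc ^ 2 - 1) / 2 with hεdef
  have hε : 0 < ε := by rw [hεdef]; linarith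
  have hεlt : 1 + ε < c * σc ^ 2 := by rw [hεdef]; linarith
  -- Step A: h drops below 1 + ε somewhere
  have stepA : ∃ s₁ ∈ Ioo (0:ℝ) 1, h s₁ ≤ 1 + ε := by
    by_contra hcon
    push_neg at hcon
    set G : ℝ → ℝ := fun s => Real.log (F s) + ε * Real.log (1 - s) with hGdef
    have hGder : ∀ s ∈ Ioo (0:ℝ) 1,
        HasDerivAt G (((1 - s) * f' s - f s) / F s + ε * (-1 / (1 - s))) s := by
      intro s hs
      have h1 : HasDerivAt (fun t => Real.log (F t)) (((1 - s) * f' s - f s) / F s) s :=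
        (hFder s hs).log (hFpos s hs).ne'
      have h2 : HasDerivAt (fun t : ℝ => Real.log (1 - t)) (-1 / (1 - s)) s := by
        have h3 : ((1:ℝ) - s) ≠ 0 := by
          have := hs.2; intro hq; linarith [hq]
        exact ((hasDerivAt_id s).const_sub 1).log h3
      exact h1.add (h2.const_mul ε)
    have hsub : Ico (1/2:ℝ) 1 ⊆ Ioo 0 1 := fun x hx => ⟨by linarith [hx.1], hx.2⟩
    have hmono : MonotoneOn G (Ico (1/2 : ℝ) 1) := by
      apply monotoneOn_of_deriv_nonneg (convex_Ico _ _)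
      · intro s hs
        exact ((hGder s (hsub hs)).differentiableAt.continuousAt).continuousWithinAt
      · intro s hs
        rw [interior_Ico] at hs
        exact ((hGder s (hsub (Ioo_subset_Ico_self hs))).differentiableAt).differentiableWithinAt
      · intro s hs
        rw [interior_Ico] at hs
        have hs' := hsub (Ioo_subset_Ico_self hs)
        rw [(hGder s hs').deriv]
        have h1s : 0 < 1 - s := by linarith [hs'.2]
        have hfps := hfpos s hs'
        have hF := hFpos s hs'
        have hcs := hcon s hs'
        have key : ε * f s ≤ (1 - s) * f' s - f s := by
          have h5 : (1 + ε) * f s < (1 - s) * f' s := by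
            have := (lt_div_iff₀ hfps).mp hcs
            linarith
          nlinarith
        have h6 : ε / (1 - s) ≤ ((1 - s) * f' s - f s) / ((1 - s) * f s) := by
          rw [div_le_div_iff₀ h1s (by positivity)]
          nlinarith [key, hfps]
        have h7 : ε * (-1 / (1 - s)) = -(ε / (1 - s)) := by ring
        have h8 : F s = (1 - s) * f s := rfl
        rw [h7, h8]
        linarith
    -- pick t near 1 to get a contradiction
    set m := min (1/4 : ℝ) (Real.exp ((G (1/2) - Real.log σc - 1) / ε)) with hm
    have hm0 : 0 < m := lt_min (by norm_num) (Real.exp_pos _)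
    have hm4 : m ≤ 1/4 := min_le_left _ _
    set t := 1 - m with ht
    have htmem : t ∈ Ico (1/2:ℝ) 1 := ⟨by rw [ht]; linarith, by rw [ht]; linarith⟩
    have h12 : (1/2:ℝ) ∈ Ico (1/2:ℝ) 1 := ⟨le_rfl, by norm_num⟩
    have hGle := hmono h12 htmem (by rw [ht]; linarith)
    have ht1 : t ∈ Ioo (0:ℝ) 1 := hsub htmem
    have hlogF : Real.log (F t) ≤ Real.log σc := Real.log_le_log (hFpos t ht1) (hFle t ht1)
    have hlogm : Real.log m ≤ (G (1/2) - Real.log σc - 1) / ε := by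
      calc Real.log m ≤ Real.log (Real.exp ((G (1/2) - Real.log σc - 1) / ε)) :=
            Real.log_le_log hm0 (min_le_right _ _)
        _ = _ := Real.log_exp _
    have h1t : (1:ℝ) - t = m := by rw [ht]; ring
    have hGt : G t ≤ Real.log σc + ε * ((G (1/2) - Real.log σc - 1) / ε) := by
      have h9 : G t = Real.log (F t) + ε * Real.log (1 - t) := rfl
      rw [h9, h1t]
      have := mul_le_mul_of_nonneg_left hlogm hε.le
      linarith
    rw [mul_div_cancel₀ _ hε.ne'] at hGt
    linarith
  obtain ⟨s₁, hs₁, hhs₁⟩ := stepA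
  -- Step B: a point s₂ > s₁ with g s₂ < c
  have htendF2 : Tendsto (fun s => c * F s ^ 2) (nhdsWithin 1 (Iio 1)) (nhds (c * σc ^ 2)) :=
    (hf2.pow 2).const_mul c
  have hev1 : ∀ᶠ s in nhdsWithin (1:ℝ) (Iio 1), 1 + ε < c * F s ^ 2 :=
    htendF2.eventually (eventually_gt_nhds hεlt)
  have hev2 : ∀ᶠ s in nhdsWithin (1:ℝ) (Iio 1), s ∈ Ioo s₁ 1 :=
    Ioo_mem_nhdsLT_of_mem ⟨hs₁.2, le_rfl⟩
  obtain ⟨s₂, hgt, hs₂mem⟩ := (hev1.and hev2).exists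
  have hs₂ : s₂ ∈ Ioo (0:ℝ) 1 := ⟨hs₁.1.trans hs₂mem.1, hs₂mem.2⟩
  have hgs₂ : g s₂ < c := by
    rw [hgeq s₂ hs₂]
    have hh2 : h s₂ < 1 + ε := lt_of_lt_of_le (hhanti hs₁ hs₂ hs₂mem.1) hhs₁
    have hF2 : 0 < F s₂ ^ 2 := by have := hFpos s₂ hs₂; positivity
    rw [div_lt_iff₀ hF2]
    linarith
  -- Step C: a point a < s₂ with g a > c
  have hf0 : f 0 = 0 := (hf_zero 0 ⟨le_rfl, one_pos⟩).mpr rfl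
  have hFcont0 : ContinuousWithinAt F (Ico 0 1) 0 :=
    ((continuousOn_const.sub continuousOn_id).mul hc0) 0 ⟨le_rfl, one_pos⟩
  have hF0 : F 0 = 0 := by show (1 - 0) * f 0 = 0; rw [hf0]; ring
  have hsubC : Ioo (0:ℝ) s₂ ⊆ Ico 0 1 := fun x hx => ⟨hx.1.le, hx.2.trans hs₂.2⟩
  have htend0 : Tendsto F (nhdsWithin 0 (Ioo 0 s₂)) (nhds 0) := by
    have := hFcont0.mono hsubC
    rw [ContinuousWithinAt, hF0] at this
    exact this
  haveI : (nhdsWithin (0:ℝ) (Ioo 0 s₂)).NeBot := by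
    apply mem_closure_iff_nhdsWithin_neBot.mp
    rw [closure_Ioo (ne_of_lt hs₂.1)]
    exact ⟨le_rfl, hs₂.1.le⟩
  have hev3 : ∀ᶠ a in nhdsWithin (0:ℝ) (Ioo 0 s₂), F a < 2 * α :=
    htend0.eventually (eventually_lt_nhds (by positivity))
  obtain ⟨a, hFa, ha⟩ := (hev3.and eventually_mem_nhdsWithin).exists
  have haI : a ∈ Ioo (0:ℝ) 1 := ⟨ha.1, ha.2.trans hs₂.2⟩
  have hga : c < g a := by
    rw [hgeq a haI]
    have h1 := hh1 a haI
    have hFa0 := hFpos a haI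
    have hsq : F a ^ 2 < (2 * α) ^ 2 := by nlinarith
    have h2 : c * F a ^ 2 < 1 := by
      rw [hcdef, div_mul_eq_mul_div, one_mul, div_lt_one (by positivity)]
      exact hsq
    rw [lt_div_iff₀ (by positivity)]
    linarith
  -- Step D: intermediate value theorem
  have hsubD : Icc a s₂ ⊆ Ioo (0:ℝ) 1 := fun x hx =>
    ⟨lt_of_lt_of_le haI.1 hx.1, lt_of_le_of_lt hx.2 hs₂.2⟩
  have hcont_g : ContinuousOn g (Icc a s₂) := by
    apply ContinuousOn.mono ?_ hsubD
    exact hcontf'.div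
      ((continuousOn_const.sub continuousOn_id).mul (hcontf.pow 3))
      (fun x hx => by
        have h1 : (0:ℝ) < 1 - x := by linarith [hx.2]
        have h2 := hfpos x hx
        positivity)
  obtain ⟨z, hzmem, hgz⟩ := intermediate_value_Icc' ha.2.le hcont_g ⟨hgs₂.le, hga.le⟩
  have hzI : z ∈ Ioo (0:ℝ) 1 := hsubD hzmem
  have hgz' : f' z / ((1 - z) * f z ^ 3) = c := by
    have h10 := hgz
    simp only [hgdef] at h10
    exact h10
  refine ⟨z, hzI, hgz', ?_, ?_⟩
  · -- 2α < F z
    have e1 : h z / F z ^ 2 = c := by rw [← hgeq z hzI]; exact hgz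
    have hFz := hFpos z hzI
    have e2 : h z = c * F z ^ 2 := by
      rw [div_eq_iff (by positivity : (F z ^ 2 : ℝ) ≠ 0)] at e1
      exact e1
    have h1 := hh1 z hzI
    have h3 : 1 < c * F z ^ 2 := e2 ▸ h1
    have hca : c * (2 * α) ^ 2 = 1 := by rw [hcdef]; field_simp
    have hsq : (2 * α) ^ 2 < F z ^ 2 := by
      calc (2 * α) ^ 2 = 1 * (2 * α) ^ 2 := by ring
        _ < c * F z ^ 2 * (2 * α) ^ 2 := by
            exact mul_lt_mul_of_pos_right h3 (by positivity)
        _ = F z ^ 2 * (c * (2 * α) ^ 2) := by ring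
        _ = F z ^ 2 := by rw [hca]; ring
    simp only [hFdef] at hsq hFz
    exact lt_of_pow_lt_pow_left₀ 2 hFz.le hsq
  · intro w hw hweq
    have hgw : g w = c := by simp only [hgdef]; exact hweq
    exact hganti.injOn hw hzI (by rw [hgw, hgz])
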